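/- arXiv:quant-ph/0605060 — 3 statements merged into one kernel-verified Lean document; each statement's English description precedes it below -/
import Mathlib

section
/- Let S = [[A, B],[C, D]] be a real symplectic 2n×2n matrix and M a complex symmetric n×n matrix with Im M positive definite. Then A + BM is invertible. -/
open Matrix

private lemma re_quad_eq (n : ℕ) (K : Matrix (Fin n) (Fin n) ℝ) (v : Fin n → ℂ) :
    (dotProduct (star v) ((K.map Complex.ofReal) *ᵥ v)).re =
      dotProduct (fun i => (v i).re) (K *ᵥ (fun i => (v i).re)) +
      dotProduct (fun i => (v i).im) (K *ᵥ (fun i => (v i).im)) := by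
  simp only [dotProduct, mulVec, Pi.star_apply, map_apply, Finset.mul_sum, Complex.re_sum,
    ← Finset.sum_add_distrib]
  refine Finset.sum_congr rfl fun i _ => Finset.sum_congr rfl fun j _ => ?_
  simp [Complex.mul_re, Complex.mul_im]

theorem siegel_A_plus_BM_invertible (n : ℕ)
    (A B C D : Matrix (Fin n) (Fin n) ℝ)
    (hS : (fromBlocks A B C D)ᵀ * (fromBlocks 0 1 (-1) 0) * (fromBlocks A B C D) =
      (fromBlocks 0 1 (-1) 0 : Matrix (Fin n ⊕ Fin n) (Fin n ⊕ Fin n) ℝ))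
    (M : Matrix (Fin n) (Fin n) ℂ) (hM : M.IsSymm)
    (hMim : (Matrix.of fun i j => (M i j).im).PosDef) :
    IsUnit (A.map (Complex.ofReal) + B.map (Complex.ofReal) * M).det := by
  -- extract the block relations
  rw [fromBlocks_transpose, fromBlocks_multiply, fromBlocks_multiply] at hS
  have h := fromBlocks_inj.mp hS
  simp only [Matrix.mul_zero, Matrix.zero_mul, Matrix.mul_one, Matrix.mul_neg,
    zero_add, add_zero, Matrix.neg_mul, Matrix.one_mul] at h
  obtain ⟨h1, h2, h3, h4⟩ := h
  -- map everything to ℂ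
  set f := Complex.ofRealHom with hf
  set A' := A.map Complex.ofReal with hA'
  set B' := B.map Complex.ofReal with hB'
  set C' := C.map Complex.ofReal with hC'
  set D' := D.map Complex.ofReal with hD'
  have hmapmul : ∀ X Y : Matrix (Fin n) (Fin n) ℝ,
      (X * Y).map Complex.ofReal = X.map Complex.ofReal * Y.map Complex.ofReal := fun X Y =>
    Matrix.map_mul (f := f)
  have hCT : ∀ X : Matrix (Fin n) (Fin n) ℝ,
      (X.map Complex.ofReal)ᴴ = Xᵀ.map Complex.ofReal := by
    intro X; ext i j; simp [conjTranspose_apply, Complex.conj_ofReal]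
  have e1 : A'ᴴ * C' = C'ᴴ * A' := by
    rw [hCT, hCT, hA', hC', ← hmapmul, ← hmapmul]
    have : Aᵀ * C = Cᵀ * A := by linear_combination (norm := noncomm_ring) h1
    rw [this]
  have e2 : A'ᴴ * D' = 1 + C'ᴴ * B' := by
    rw [hCT, hCT, hD', hB', ← hmapmul, ← hmapmul]
    have : Aᵀ * D = 1 + Cᵀ * B := by linear_combination (norm := noncomm_ring) h2
    rw [this, Matrix.map_add _ (fun a b => Complex.ofReal_add a b), hmapmul, Matrix.map_one _ Complex.ofReal_zero Complex.ofReal_one]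
  have e3 : D'ᴴ * A' = 1 + B'ᴴ * C' := by
    rw [hCT, hCT, hA', hC', ← hmapmul, ← hmapmul]
    have : Dᵀ * A = 1 + Bᵀ * C := by linear_combination (norm := noncomm_ring) -h3
    rw [this, Matrix.map_add _ (fun a b => Complex.ofReal_add a b), hmapmul, Matrix.map_one _ Complex.ofReal_zero Complex.ofReal_one]
  have e4 : B'ᴴ * D' = D'ᴴ * B' := by
    rw [hCT, hCT, hB', hD', ← hmapmul, ← hmapmul]
    have : Bᵀ * D = Dᵀ * B := by linear_combination (norm := noncomm_ring) h4
    rw [this]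
  set α := A' + B' * M with hα
  set γ := C' + D' * M with hγ
  -- the key identity
  have key : αᴴ * γ - γᴴ * α = M - Mᴴ := by
    have hαH : αᴴ = A'ᴴ + Mᴴ * B'ᴴ := by
      rw [hα, conjTranspose_add, conjTranspose_mul]
    have hγH : γᴴ = C'ᴴ + Mᴴ * D'ᴴ := by
      rw [hγ, conjTranspose_add, conjTranspose_mul]
    rw [hαH, hγH, hγ, hα]
    have expand : (A'ᴴ + Mᴴ * B'ᴴ) * (C' + D' * M) - (C'ᴴ + Mᴴ * D'ᴴ) * (A' + B' * M)
        = (A'ᴴ * C' - C'ᴴ * A') + (A'ᴴ * D') * M - Mᴴ * (D'ᴴ * A')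
          + Mᴴ * (B'ᴴ * C') - (C'ᴴ * B') * M
          + Mᴴ * (B'ᴴ * D') * M - Mᴴ * (D'ᴴ * B') * M := by
      noncomm_ring
    rw [expand, e1, e2, e3, e4]
    noncomm_ring
  -- M - Mᴴ = 2i • (Im M)
  set K := (Matrix.of fun i j => (M i j).im : Matrix (Fin n) (Fin n) ℝ) with hK
  have hMH : M - Mᴴ = (2 * Complex.I) • K.map Complex.ofReal := by
    ext i j
    have hsymm : M j i = M i j := by
      conv_lhs => rw [← hM]
      rfl
    simp only [Matrix.sub_apply, conjTranspose_apply, Matrix.smul_apply, map_apply, hK, of_apply,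
      RingHom.coe_coe, smul_eq_mul, hsymm, Complex.star_def]
    rw [Complex.sub_conj]
    push_cast
    ring
  -- injectivity of mulVec
  have hker : ∀ v : Fin n → ℂ, α *ᵥ v = 0 → v = 0 := by
    intro v hv
    by_contra hvne
    have hz : dotProduct (star v) ((αᴴ * γ - γᴴ * α) *ᵥ v) = 0 := by
      rw [Matrix.sub_mulVec, dotProduct_sub, ← Matrix.mulVec_mulVec, ← Matrix.mulVec_mulVec]
      have t1 : dotProduct (star v) (αᴴ *ᵥ (γ *ᵥ v)) = 0 := by
        rw [dotProduct_mulVec, ← star_mulVec, hv]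
        simp
      have t2 : dotProduct (star v) (γᴴ *ᵥ (α *ᵥ v)) = 0 := by
        rw [hv]
        simp
      rw [t1, t2, sub_zero]
    rw [key, hMH, smul_mulVec, dotProduct_smul, smul_eq_mul, mul_eq_zero] at hz
    have h2I : (2 * Complex.I) ≠ 0 := by simp [Complex.I_ne_zero]
    have hq : dotProduct (star v) ((K.map Complex.ofReal) *ᵥ v) = 0 := hz.resolve_left h2I
    have hre := congrArg Complex.re hq
    rw [re_quad_eq] at hre
    -- positivity
    set a := fun i => (v i).re with ha
    set b := fun i => (v i).im with hb
    have hab : a ≠ 0 ∨ b ≠ 0 := by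
      by_contra hcon
      push_neg at hcon
      apply hvne
      funext i
      have h1 := congrFun hcon.1 i
      have h2 := congrFun hcon.2 i
      simp only [ha, hb, Pi.zero_apply] at h1 h2
      exact Complex.ext h1 h2
    have hsd := hMim.posSemidef
    have hpos : 0 < dotProduct a (K *ᵥ a) + dotProduct b (K *ᵥ b) := by
      rcases hab with hane | hbne
      · have p1 : 0 < dotProduct a (K *ᵥ a) := by
          simpa using hMim.dotProduct_mulVec_pos hane
        have p2 : 0 ≤ dotProduct b (K *ᵥ b) := by
          simpa using hsd.dotProduct_mulVec_nonneg b
        linarith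
      · have p1 : 0 ≤ dotProduct a (K *ᵥ a) := by
          simpa using hsd.dotProduct_mulVec_nonneg a
        have p2 : 0 < dotProduct b (K *ᵥ b) := by
          simpa using hMim.dotProduct_mulVec_pos hbne
        linarith
    rw [hre] at hpos
    exact lt_irrefl _ hpos
  have hinj : Function.Injective α.mulVec := by
    intro x y hxy
    have : α *ᵥ (x - y) = 0 := by
      rw [Matrix.mulVec_sub, hxy, sub_self]
    have := hker _ this
    exact sub_eq_zero.mp this
  have := Matrix.mulVec_injective_iff_isUnit.mp hinj
  exact (Matrix.isUnit_iff_isUnit_det α).mp this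
end

section
/- The action of the symplectic group on the Siegel half-space given by α(S)M = (C + DM)(A + BM)⁻¹ is transitive: for any M, M' in Σ(n) there exists a real symplectic matrix S with M' = α(S)M. -/
open Matrix

noncomputable def siegelAction {n : ℕ}
    (S : Matrix (Fin n ⊕ Fin n) (Fin n ⊕ Fin n) ℝ)
    (M : Matrix (Fin n) (Fin n) ℂ) : Matrix (Fin n) (Fin n) ℂ :=
  (S.toBlocks₂₁.map (Complex.ofReal) + S.toBlocks₂₂.map (Complex.ofReal) * M) *
    (S.toBlocks₁₁.map (Complex.ofReal) + S.toBlocks₁₂.map (Complex.ofReal) * M)⁻¹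

open scoped MatrixOrder in
/-- Every real positive definite matrix has a symmetric invertible square root. -/
lemma exists_symm_sqrt {n : ℕ} {Y : Matrix (Fin n) (Fin n) ℝ} (hY : Y.PosDef) :
    ∃ R : Matrix (Fin n) (Fin n) ℝ, Rᵀ = R ∧ R * R = Y ∧ IsUnit R.det := by
  refine ⟨CFC.sqrt Y, ?_, CFC.sqrt_mul_sqrt_self Y hY.posSemidef.nonneg, ?_⟩
  · have h := (CFC.sqrt_nonneg Y).posSemidef.isHermitian
    exact (by simpa using h : (CFC.sqrt Y).IsSymm).eq
  · have h : (CFC.sqrt Y).det * (CFC.sqrt Y).det = Y.det := by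
      rw [← Matrix.det_mul, CFC.sqrt_mul_sqrt_self Y hY.posSemidef.nonneg]
    have hne : (CFC.sqrt Y).det ≠ 0 := by
      intro h0
      have hd := hY.det_pos
      rw [← h, h0, zero_mul] at hd
      exact lt_irrefl 0 hd
    exact hne.isUnit

theorem siegel_action_transitive (n : ℕ)
    (M M' : Matrix (Fin n) (Fin n) ℂ)
    (hM : M.IsSymm) (hM' : M'.IsSymm)
    (hMim : (Matrix.of fun i j => (M i j).im).PosDef)
    (hM'im : (Matrix.of fun i j => (M' i j).im).PosDef) :
    ∃ S : Matrix (Fin n ⊕ Fin n) (Fin n ⊕ Fin n) ℝ,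
      Sᵀ * (fromBlocks 0 1 (-1) 0) * S =
        (fromBlocks 0 1 (-1) 0 : Matrix (Fin n ⊕ Fin n) (Fin n ⊕ Fin n) ℝ) ∧
      M' = siegelAction S M := by
  classical
  obtain ⟨X, hX⟩ : ∃ P : Matrix (Fin n) (Fin n) ℝ, P = Matrix.of fun i j => (M i j).re :=
    ⟨_, rfl⟩
  obtain ⟨X', hX'⟩ : ∃ P : Matrix (Fin n) (Fin n) ℝ, P = Matrix.of fun i j => (M' i j).re :=
    ⟨_, rfl⟩
  obtain ⟨Y, hY⟩ : ∃ P : Matrix (Fin n) (Fin n) ℝ, P = Matrix.of fun i j => (M i j).im :=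
    ⟨_, rfl⟩
  obtain ⟨Y', hY'⟩ : ∃ P : Matrix (Fin n) (Fin n) ℝ, P = Matrix.of fun i j => (M' i j).im :=
    ⟨_, rfl⟩
  have hYpd : Y.PosDef := hY ▸ hMim
  have hY'pd : Y'.PosDef := hY' ▸ hM'im
  have hMsymm : ∀ i j, M j i = M i j := by
    intro i j
    conv_lhs => rw [← hM]
    rfl
  have hM'symm : ∀ i j, M' j i = M' i j := by
    intro i j
    conv_lhs => rw [← hM']
    rfl
  have hXs : Xᵀ = X := by
    ext i j
    simp [hX, Matrix.transpose_apply, hMsymm i j]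
  have hX's : X'ᵀ = X' := by
    ext i j
    simp [hX', Matrix.transpose_apply, hM'symm i j]
  obtain ⟨R, hRsym, hRR, hRdet⟩ := exists_symm_sqrt hYpd
  obtain ⟨R', hR'sym, hR'R', hR'det⟩ := exists_symm_sqrt hY'pd
  have hRinv : R * R⁻¹ = 1 := Matrix.mul_nonsing_inv R hRdet
  have hRinv' : R⁻¹ * R = 1 := Matrix.nonsing_inv_mul R hRdet
  have hR'inv : R' * R'⁻¹ = 1 := Matrix.mul_nonsing_inv R' hR'det
  have hR'inv' : R'⁻¹ * R' = 1 := Matrix.nonsing_inv_mul R' hR'det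
  obtain ⟨A, hA⟩ : ∃ P : Matrix (Fin n) (Fin n) ℝ, P = R'⁻¹ * R := ⟨_, rfl⟩
  obtain ⟨D, hD⟩ : ∃ P : Matrix (Fin n) (Fin n) ℝ, P = R' * R⁻¹ := ⟨_, rfl⟩
  obtain ⟨C, hC⟩ : ∃ P : Matrix (Fin n) (Fin n) ℝ, P = X' * A - D * X := ⟨_, rfl⟩
  have hAT : Aᵀ = R * R'⁻¹ := by
    rw [hA, Matrix.transpose_mul, Matrix.transpose_nonsing_inv, hRsym, hR'sym]
  have hDT : Dᵀ = R⁻¹ * R' := by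
    rw [hD, Matrix.transpose_mul, Matrix.transpose_nonsing_inv, hRsym, hR'sym]
  have hATD : Aᵀ * D = 1 := by
    rw [hAT, hD, Matrix.mul_assoc, ← Matrix.mul_assoc R'⁻¹, hR'inv', Matrix.one_mul, hRinv]
  have hDTA : Dᵀ * A = 1 := by
    rw [hDT, hA, Matrix.mul_assoc, ← Matrix.mul_assoc R', hR'inv, Matrix.one_mul, hRinv']
  have hATC : Aᵀ * C = Cᵀ * A := by
    have h1 : Aᵀ * C = Aᵀ * X' * A - X := by
      rw [hC, Matrix.mul_sub, ← Matrix.mul_assoc, ← Matrix.mul_assoc, hATD, Matrix.one_mul]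
    have h2 : Cᵀ * A = Aᵀ * X' * A - X := by
      rw [hC, Matrix.transpose_sub, Matrix.sub_mul, Matrix.transpose_mul,
        Matrix.transpose_mul, hX's, hXs, Matrix.mul_assoc X, hDTA, Matrix.mul_one,
        Matrix.mul_assoc]
    rw [h1, h2]
  -- an explicit right inverse for A
  have hArinv : A * (R⁻¹ * R') = 1 := by
    rw [hA, Matrix.mul_assoc, ← Matrix.mul_assoc R, hRinv, Matrix.one_mul, hR'inv']
  refine ⟨fromBlocks A 0 C D, ?_, ?_⟩
  · rw [Matrix.fromBlocks_transpose, Matrix.fromBlocks_multiply, Matrix.fromBlocks_multiply]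
    have e1 : (Aᵀ * 0 + Cᵀ * (-1)) * A + (Aᵀ * 1 + Cᵀ * 0) * C = 0 := by
      simp only [Matrix.mul_zero, Matrix.mul_one, add_zero, zero_add, Matrix.mul_neg,
        Matrix.neg_mul, hATC]
      exact neg_add_cancel _
    have e2 : (Aᵀ * 0 + Cᵀ * (-1)) * 0 + (Aᵀ * 1 + Cᵀ * 0) * D = 1 := by
      simp only [Matrix.mul_zero, Matrix.mul_one, add_zero, zero_add, Matrix.mul_neg,
        Matrix.neg_mul, Matrix.zero_mul, hATD]
    have e3 : (0ᵀ * 0 + Dᵀ * (-1)) * A + (0ᵀ * 1 + Dᵀ * 0) * C = -1 := by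
      simp only [Matrix.transpose_zero, Matrix.mul_zero, Matrix.mul_one, add_zero,
        zero_add, Matrix.mul_neg, Matrix.neg_mul, Matrix.zero_mul, hDTA]
    have e4 : (0ᵀ * 0 + Dᵀ * (-1)) * 0 + (0ᵀ * 1 + Dᵀ * 0) * D = 0 := by
      simp only [Matrix.transpose_zero, Matrix.mul_zero, Matrix.mul_one, add_zero,
        zero_add, Matrix.mul_neg, Matrix.neg_mul, Matrix.zero_mul]
    rw [e1, e2, e3, e4]
  · -- the action part
    have mapmul : ∀ (P Q : Matrix (Fin n) (Fin n) ℝ),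
        (P * Q).map Complex.ofReal = P.map Complex.ofReal * Q.map Complex.ofReal := by
      intro P Q
      exact Matrix.map_mul (f := Complex.ofRealHom)
    have mapadd : ∀ (P Q : Matrix (Fin n) (Fin n) ℝ),
        (P + Q).map Complex.ofReal = P.map Complex.ofReal + Q.map Complex.ofReal :=
      fun P Q => Matrix.map_add _ (by simp) P Q
    have hMdecomp : M = X.map Complex.ofReal + Complex.I • Y.map Complex.ofReal := by
      ext i j
      simp only [Matrix.add_apply, Matrix.smul_apply, Matrix.map_apply, smul_eq_mul,
        hX, hY, Matrix.of_apply]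
      rw [mul_comm]
      exact (Complex.re_add_im (M i j)).symm
    have hM'decomp : M' = X'.map Complex.ofReal + Complex.I • Y'.map Complex.ofReal := by
      ext i j
      simp only [Matrix.add_apply, Matrix.smul_apply, Matrix.map_apply, smul_eq_mul,
        hX', hY', Matrix.of_apply]
      rw [mul_comm]
      exact (Complex.re_add_im (M' i j)).symm
    have hreal1 : C + D * X = X' * A := by rw [hC]; abel
    have hreal2 : D * Y = Y' * A := by
      have l1 : R' * R⁻¹ * (R * R) = R' * R := by
        rw [Matrix.mul_assoc, ← Matrix.mul_assoc R⁻¹ R R, hRinv', Matrix.one_mul]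
      have l2 : R' * R' * (R'⁻¹ * R) = R' * R := by
        rw [Matrix.mul_assoc, ← Matrix.mul_assoc R' R'⁻¹ R, hR'inv, Matrix.one_mul]
      rw [hD, hA, ← hRR, ← hR'R', l1, l2]
    have hkey : C.map Complex.ofReal + D.map Complex.ofReal * M =
        M' * A.map Complex.ofReal := by
      rw [hMdecomp, hM'decomp, Matrix.mul_add, mul_smul_comm, Matrix.add_mul,
        smul_mul_assoc, ← mapmul, ← mapmul, ← mapmul, ← mapmul, ← hreal2,
        ← hreal1, mapadd]
      abel
    have hAmdet : IsUnit ((A.map Complex.ofReal).det) := by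
      apply Matrix.isUnit_det_of_right_inverse (B := (R⁻¹ * R').map Complex.ofReal)
      rw [← mapmul, hArinv]
      exact Matrix.map_one _ (by simp) (by simp)
    have hact : siegelAction (fromBlocks A 0 C D) M =
        (C.map Complex.ofReal + D.map Complex.ofReal * M) * (A.map Complex.ofReal)⁻¹ := by
      unfold siegelAction
      rw [Matrix.toBlocks_fromBlocks₁₁, Matrix.toBlocks_fromBlocks₁₂,
        Matrix.toBlocks_fromBlocks₂₁, Matrix.toBlocks_fromBlocks₂₂]
      have h0 : ((0 : Matrix (Fin n) (Fin n) ℝ)).map Complex.ofReal = 0 := by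
        ext i j; simp
      rw [h0]
      simp only [Matrix.zero_mul, add_zero]
    rw [hact, hkey, Matrix.mul_assoc, Matrix.mul_nonsing_inv _ hAmdet, Matrix.mul_one]
end

section
/- With U_φ the wavepacket transform as above, one has the intertwining relations U_φ(x_j ψ)(x,p) = (x_j/2 + iℏ ∂_{p_j}) U_φψ(x,p) and U_φ(−iℏ ∂_{x_j}ψ)(x,p) = (p_j/2 − iℏ ∂_{x_j}) U_φψ(x,p) for all Schwartz ψ. -/
open MeasureTheory Complex Real

noncomputable def wavepacket {n : ℕ} (ℏ : ℝ) (φ : (Fin n → ℝ) → ℂ)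
    (ψ : (Fin n → ℝ) → ℂ) : (Fin n → ℝ) × (Fin n → ℝ) → ℂ := fun z =>
  ((2 * π * ℏ) ^ (-(n : ℝ) / 2) : ℝ) *
    Complex.exp ((Complex.I / (2 * ℏ)) * (∑ i, z.2 i * z.1 i : ℝ)) *
    ∫ x' : Fin n → ℝ,
      Complex.exp (-(Complex.I / ℏ) * (∑ i, z.2 i * x' i : ℝ)) * ψ x' *
        (starRingEnd ℂ) (φ (z.1 - x'))

lemma sum_update_mul {n : ℕ} (q v : Fin n → ℝ) (j : Fin n) (t : ℝ) :
    ∑ i, Function.update q j t i * v i = t * v j + ∑ i ∈ Finset.univ.erase j, q i * v i := by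
  rw [← Finset.add_sum_erase _ _ (Finset.mem_univ j), Function.update_self]
  congr 1
  exact Finset.sum_congr rfl fun i hi => by
    rw [Function.update_of_ne (Finset.ne_of_mem_erase hi)]

lemma sum_mul_update {n : ℕ} (q v : Fin n → ℝ) (j : Fin n) (t : ℝ) :
    ∑ i, q i * Function.update v j t i = t * q j + ∑ i ∈ Finset.univ.erase j, q i * v i := by
  rw [← Finset.add_sum_erase _ _ (Finset.mem_univ j), Function.update_self]
  rw [mul_comm]
  congr 1
  exact Finset.sum_congr rfl fun i hi => by
    rw [Function.update_of_ne (Finset.ne_of_mem_erase hi)]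

lemma hasDerivAt_cexp_linear (a : ℂ) (b c : ℝ) (t : ℝ) :
    HasDerivAt (fun s : ℝ => Complex.exp (a * ((s * b + c : ℝ) : ℂ)))
      (a * b * Complex.exp (a * ((t * b + c : ℝ) : ℂ))) t := by
  have h1 : HasDerivAt (fun s : ℝ => ((s * b + c : ℝ) : ℂ)) (b : ℂ) t := by
    simpa using (((hasDerivAt_id t).mul_const b).add_const c).ofReal_comp
  have h2 : HasDerivAt (fun s : ℝ => a * ((s * b + c : ℝ) : ℂ)) (a * b) t := h1.const_mul a
  simpa [mul_comm] using h2.cexp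

lemma norm_cexp_of_re_eq_zero (z : ℂ) (h : z.re = 0) : ‖Complex.exp z‖ = 1 := by
  rw [Complex.norm_exp, h, Real.exp_zero]

lemma wavepacket_alt {n : ℕ} (ℏ : ℝ) (hℏ : ℏ ≠ 0) (φ f : (Fin n → ℝ) → ℂ)
    (z p : Fin n → ℝ) :
    wavepacket ℏ φ f (z, p) =
      ((2 * π * ℏ) ^ (-(n : ℝ) / 2) : ℝ) *
        Complex.exp (-(Complex.I / (2 * ℏ)) * (∑ i, p i * z i : ℝ)) *
        ∫ y : Fin n → ℝ,
          Complex.exp ((Complex.I / ℏ) * (∑ i, p i * y i : ℝ)) * f (z - y) *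
            (starRingEnd ℂ) (φ y) := by
  have hℏc : (ℏ : ℂ) ≠ 0 := Complex.ofReal_ne_zero.mpr hℏ
  have key : ∀ y : Fin n → ℝ,
      Complex.exp (-(Complex.I / ℏ) * ((∑ i, p i * (z - y) i : ℝ) : ℂ)) =
        Complex.exp (-(Complex.I / ℏ) * ((∑ i, p i * z i : ℝ) : ℂ)) *
          Complex.exp ((Complex.I / ℏ) * ((∑ i, p i * y i : ℝ) : ℂ)) := by
    intro y
    rw [← Complex.exp_add]
    congr 1
    have h : (∑ i, p i * (z - y) i) = (∑ i, p i * z i) - (∑ i, p i * y i) := by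
      rw [← Finset.sum_sub_distrib]
      exact Finset.sum_congr rfl fun i _ => by simp [Pi.sub_apply, mul_sub]
    rw [h]
    push_cast
    ring
  unfold wavepacket
  rw [← integral_sub_left_eq_self (fun x' => Complex.exp (-(Complex.I / ℏ) *
      ((∑ i, p i * x' i : ℝ) : ℂ)) * f x' * (starRingEnd ℂ) (φ (z - x'))) volume z]
  simp only [sub_sub_cancel]
  have h2 : (fun y => Complex.exp (-(Complex.I / ℏ) * ((∑ i, p i * (z - y) i : ℝ) : ℂ)) *
        f (z - y) * (starRingEnd ℂ) (φ y)) =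
      fun y => Complex.exp (-(Complex.I / ℏ) * ((∑ i, p i * z i : ℝ) : ℂ)) *
        (Complex.exp ((Complex.I / ℏ) * ((∑ i, p i * y i : ℝ) : ℂ)) * f (z - y) *
          (starRingEnd ℂ) (φ y)) := by
    funext y
    rw [key y]
    ring
  rw [h2, integral_const_mul, ← mul_assoc, mul_assoc _ (Complex.exp _) (Complex.exp _),
    ← Complex.exp_add]
  congr 3
  field_simp
  ring


theorem wavepacket_intertwining (n : ℕ) (ℏ : ℝ) (hℏ : 0 < ℏ)
    (φ ψ : SchwartzMap (Fin n → ℝ) ℂ) (j : Fin n)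
    (x p : Fin n → ℝ) :
    wavepacket ℏ φ (fun x' => (x' j : ℂ) * ψ x') (x, p) =
        ((x j : ℂ) / 2) * wavepacket ℏ φ ψ (x, p) +
          Complex.I * ℏ *
            deriv (fun t : ℝ => wavepacket ℏ φ ψ (x, Function.update p j t)) (p j) ∧
    wavepacket ℏ φ (fun x' => -Complex.I * ℏ * fderiv ℝ (⇑ψ) x' (Pi.single j 1)) (x, p) =
        ((p j : ℂ) / 2) * wavepacket ℏ φ ψ (x, p) -
          Complex.I * ℏ *
            deriv (fun t : ℝ => wavepacket ℏ φ ψ (Function.update x j t, p)) (x j) := by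
  constructor
  ·
      have hℏ0 : ℏ ≠ 0 := ne_of_gt hℏ
      have hℏc : (ℏ : ℂ) ≠ 0 := Complex.ofReal_ne_zero.mpr hℏ0
      have hinv : (ℏ : ℂ) * (ℏ : ℂ)⁻¹ = 1 := mul_inv_cancel₀ hℏc
      set C : ℂ := (((2 * π * ℏ) ^ (-(n : ℝ) / 2) : ℝ) : ℂ) with hC
      set c₁ : ℝ := ∑ i ∈ Finset.univ.erase j, p i * x i with hc₁
      set c₂ : (Fin n → ℝ) → ℝ := fun x' => ∑ i ∈ Finset.univ.erase j, p i * x' i with hc₂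
      set E : ℝ → ℂ := fun t => Complex.exp ((Complex.I / (2 * ℏ)) * ((t * x j + c₁ : ℝ) : ℂ))
        with hE
      set F : ℝ → (Fin n → ℝ) → ℂ := fun t x' =>
        Complex.exp (-(Complex.I / ℏ) * ((t * x' j + c₂ x' : ℝ) : ℂ)) * ψ x' *
          (starRingEnd ℂ) (φ (x - x')) with hF
      set F' : ℝ → (Fin n → ℝ) → ℂ := fun t x' =>
        -(Complex.I / ℏ) * (x' j : ℂ) *
          Complex.exp (-(Complex.I / ℏ) * ((t * x' j + c₂ x' : ℝ) : ℂ)) * ψ x' *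
          (starRingEnd ℂ) (φ (x - x')) with hF'
      have hfun : ∀ g : (Fin n → ℝ) → ℂ, (fun t => wavepacket ℏ φ g (x, Function.update p j t)) =
          fun t => C * E t * ∫ x', Complex.exp (-(Complex.I / ℏ) *
            ((t * x' j + c₂ x' : ℝ) : ℂ)) * g x' * (starRingEnd ℂ) (φ (x - x')) := by
        intro g
        funext t
        simp only [wavepacket, sum_update_mul, hE, hC, hc₁, hc₂]
      -- bound for φ
      obtain ⟨Cφ, hCφ⟩ : ∃ c, ∀ y, ‖φ y‖ ≤ c := by
        obtain ⟨c, hc⟩ := φ.decay' 0 0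
        exact ⟨c, fun y => by have h := hc y; simp at h; exact h⟩
      have hCφ0 : 0 ≤ Cφ := (norm_nonneg _).trans (hCφ 0)
      -- continuity
      have hsum : ∀ t : ℝ, Continuous fun x' : Fin n → ℝ => t * x' j + c₂ x' := by
        intro t
        simp only [hc₂]
        exact (continuous_const.mul (continuous_apply j)).add
          (continuous_finset_sum _ fun i _ => continuous_const.mul (continuous_apply i))
      have hconj : Continuous fun x' : Fin n → ℝ => (starRingEnd ℂ) (φ (x - x')) :=
        Complex.continuous_conj.comp (φ.continuous.comp (continuous_const.sub continuous_id))
      have hFcont : ∀ t, Continuous (F t) := by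
        intro t
        exact ((Complex.continuous_exp.comp (continuous_const.mul
          (Complex.continuous_ofReal.comp (hsum t)))).mul ψ.continuous).mul hconj
      have hF'cont : ∀ t, Continuous (F' t) := by
        intro t
        exact ((((continuous_const.mul (Complex.continuous_ofReal.comp
          (continuous_apply j))).mul (Complex.continuous_exp.comp (continuous_const.mul
          (Complex.continuous_ofReal.comp (hsum t))))).mul ψ.continuous).mul hconj)
      -- norms
      have hnormF : ∀ t x', ‖F t x'‖ = ‖ψ x'‖ * ‖φ (x - x')‖ := by
        intro t x'
        simp only [hF]
        rw [norm_mul, norm_mul, norm_cexp_of_re_eq_zero _ (by simp), RCLike.norm_conj, one_mul]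
      have hnormF' : ∀ t x', ‖F' t x'‖ = ℏ⁻¹ * (|x' j| * (‖ψ x'‖ * ‖φ (x - x')‖)) := by
        intro t x'
        simp only [hF']
        rw [norm_mul, norm_mul, norm_mul, norm_mul, norm_cexp_of_re_eq_zero _ (by simp),
          RCLike.norm_conj, norm_neg, norm_div, Complex.norm_I, Complex.norm_real,
          Complex.norm_real, Real.norm_eq_abs, Real.norm_eq_abs, abs_of_pos hℏ]
        ring
      -- integrability
      have hFint : Integrable (F (p j)) := by
        apply Integrable.mono' ((ψ.integrable.norm).const_mul Cφ)
          (hFcont (p j)).aestronglyMeasurable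
        filter_upwards with x'
        rw [hnormF]
        calc ‖ψ x'‖ * ‖φ (x - x')‖ ≤ ‖ψ x'‖ * Cφ := by gcongr; exact hCφ _
          _ = Cφ * ‖ψ x'‖ := by ring
      have hboundInt : Integrable (fun x' : Fin n → ℝ => (ℏ⁻¹ * Cφ) * (‖x'‖ ^ 1 * ‖ψ x'‖)) :=
        (ψ.integrable_pow_mul volume 1).const_mul _
      -- derivative of the integral
      have hInt : HasDerivAt (fun t => ∫ x', F t x') (∫ x', F' (p j) x') (p j) := by
        refine (hasDerivAt_integral_of_dominated_loc_of_deriv_le (Metric.ball_mem_nhds _ one_pos)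
          (Filter.Eventually.of_forall fun t => (hFcont t).aestronglyMeasurable) hFint
          (F' := F') ((hF'cont (p j)).aestronglyMeasurable) ?_ hboundInt ?_).2
        · filter_upwards with x' t _
          rw [hnormF']
          have h1 : |x' j| ≤ ‖x'‖ := by simpa using norm_le_pi_norm x' j
          calc ℏ⁻¹ * (|x' j| * (‖ψ x'‖ * ‖φ (x - x')‖))
              ≤ ℏ⁻¹ * (‖x'‖ * (‖ψ x'‖ * Cφ)) := by gcongr <;> first | exact h1 | exact hCφ _
            _ = (ℏ⁻¹ * Cφ) * (‖x'‖ ^ 1 * ‖ψ x'‖) := by ring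
        · filter_upwards with x' t _
          exact ((hasDerivAt_cexp_linear (-(Complex.I / ℏ)) (x' j) (c₂ x') t).mul_const
            (ψ x')).mul_const ((starRingEnd ℂ) (φ (x - x')))
      have hE' : HasDerivAt E ((Complex.I / (2 * ℏ)) * (x j) * E (p j)) (p j) :=
        hasDerivAt_cexp_linear _ (x j) c₁ (p j)
      have hW : HasDerivAt (fun t => C * E t * ∫ x', F t x')
          (C * ((Complex.I / (2 * ℏ)) * (x j) * E (p j)) * (∫ x', F (p j) x') +
            C * E (p j) * ∫ x', F' (p j) x') (p j) := (hE'.const_mul C).mul hInt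
      -- value identities
      have hI1 : (Complex.I * ℏ) * (-(Complex.I / ℏ)) = 1 := by
        field_simp
        linear_combination (-(1 : ℂ)) * Complex.I_mul_I
      have hvalψ : wavepacket ℏ φ ψ (x, p) = C * E (p j) * ∫ x', F (p j) x' := by
        have h0 := congrFun (hfun ψ) (p j)
        rw [Function.update_eq_self] at h0
        rw [h0]
      have hvalX : wavepacket ℏ φ (fun x' => ((x' j : ℝ) : ℂ) * ψ x') (x, p) =
          C * E (p j) * ((Complex.I * ℏ) * ∫ x', F' (p j) x') := by
        have h0 := congrFun (hfun fun x' => ((x' j : ℝ) : ℂ) * ψ x') (p j)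
        rw [Function.update_eq_self] at h0
        have hintEq : (∫ x', Complex.exp (-(Complex.I / ℏ) * (((p j) * x' j + c₂ x' : ℝ) : ℂ)) *
            ((x' j : ℂ) * ψ x') * (starRingEnd ℂ) (φ (x - x'))) =
            (Complex.I * ℏ) * ∫ x', F' (p j) x' := by
          rw [← integral_const_mul]
          congr 1
          funext x'
          simp only [hF']
          linear_combination (-((x' j : ℂ) * Complex.exp (-(Complex.I / ℏ) *
            (((p j) * x' j + c₂ x' : ℝ) : ℂ)) * ψ x' * (starRingEnd ℂ) (φ (x - x')))) * hI1
        rw [h0, hintEq]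
      rw [show (fun t : ℝ => wavepacket ℏ φ ψ (x, Function.update p j t)) =
        fun t => C * E t * ∫ x', F t x' from hfun ψ, hW.deriv, hvalψ, hvalX]
      have hkey : Complex.I * (ℏ : ℂ) * (Complex.I / (2 * ℏ)) = -(1/2) := by
        rw [div_eq_mul_inv, mul_inv]
        linear_combination (((ℏ : ℂ) * (ℏ:ℂ)⁻¹) / 2) * Complex.I_mul_I + (-(1:ℂ)/2) * hinv
      linear_combination ((x j : ℂ) * C * E (p j) * (∫ x', F (p j) x')) * hkey + (-((x j : ℂ) * C * E (p j) * (∫ x', F (p j) x')) * ((ℏ:ℂ) * (ℏ:ℂ)⁻¹)) * Complex.I_mul_I + ((x j : ℂ) * C * E (p j) * (∫ x', F (p j) x')) * hinv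
  ·
      have hℏ0 : ℏ ≠ 0 := ne_of_gt hℏ
      have hℏc : (ℏ : ℂ) ≠ 0 := Complex.ofReal_ne_zero.mpr hℏ0
      have hinv : (ℏ : ℂ) * (ℏ : ℂ)⁻¹ = 1 := mul_inv_cancel₀ hℏc
      set C : ℂ := (((2 * π * ℏ) ^ (-(n : ℝ) / 2) : ℝ) : ℂ) with hC
      set c₁ : ℝ := ∑ i ∈ Finset.univ.erase j, p i * x i with hc₁
      set G : ℝ → ℂ := fun t =>
        Complex.exp (-(Complex.I / (2 * ℏ)) * ((t * p j + c₁ : ℝ) : ℂ)) with hG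
      set H : ℝ → (Fin n → ℝ) → ℂ := fun t y =>
        Complex.exp ((Complex.I / ℏ) * ((∑ i, p i * y i : ℝ) : ℂ)) *
          ψ (Function.update x j t - y) * (starRingEnd ℂ) (φ y) with hH
      set H' : ℝ → (Fin n → ℝ) → ℂ := fun t y =>
        Complex.exp ((Complex.I / ℏ) * ((∑ i, p i * y i : ℝ) : ℂ)) *
          (fderiv ℝ ψ (Function.update x j t - y) (Pi.single j 1)) * (starRingEnd ℂ) (φ y)
        with hH'
      have hfun : ∀ f : (Fin n → ℝ) → ℂ,
          (fun t => wavepacket ℏ φ f (Function.update x j t, p)) =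
          fun t => C * G t * ∫ y, Complex.exp ((Complex.I / ℏ) *
            ((∑ i, p i * y i : ℝ) : ℂ)) * f (Function.update x j t - y) *
            (starRingEnd ℂ) (φ y) := by
        intro f
        funext t
        rw [wavepacket_alt ℏ hℏ0 φ f (Function.update x j t) p]
        simp only [sum_mul_update, hG, hC, hc₁]
      -- bounds
      obtain ⟨Cψ, hCψ⟩ : ∃ c, ∀ y, ‖ψ y‖ ≤ c := by
        obtain ⟨c, hc⟩ := ψ.decay' 0 0
        exact ⟨c, fun y => by have h := hc y; simp at h; exact h⟩
      obtain ⟨M, hM⟩ : ∃ c, ∀ z, ‖fderiv ℝ ψ z‖ ≤ c := by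
        obtain ⟨c, hc⟩ := (SchwartzMap.fderivCLM ℝ _ _ ψ).decay' 0 0
        exact ⟨c, fun z => by have h := hc z; simp at h; exact h⟩
      have hfd : ∀ z, ‖fderiv ℝ ψ z (Pi.single j 1)‖ ≤
          M * ‖(Pi.single j 1 : Fin n → ℝ)‖ := fun z =>
        ((fderiv ℝ ψ z).le_opNorm _).trans (mul_le_mul_of_nonneg_right (hM z) (norm_nonneg _))
      -- continuity
      have hexpcont : Continuous fun y : Fin n → ℝ =>
          Complex.exp ((Complex.I / ℏ) * ((∑ i, p i * y i : ℝ) : ℂ)) :=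
        Complex.continuous_exp.comp (continuous_const.mul (Complex.continuous_ofReal.comp
          (continuous_finset_sum _ fun i _ => continuous_const.mul (continuous_apply i))))
      have hconj : Continuous fun y : Fin n → ℝ => (starRingEnd ℂ) (φ y) :=
        Complex.continuous_conj.comp φ.continuous
      have hHcont : ∀ t, Continuous (H t) := fun t =>
        ((hexpcont.mul (ψ.continuous.comp (continuous_const.sub continuous_id))).mul hconj)
      have hH'cont : ∀ t, Continuous (H' t) := by
        intro t
        refine (hexpcont.mul ?_).mul hconj
        exact (ContinuousLinearMap.apply ℝ ℂ (Pi.single j 1 : Fin n → ℝ)).continuous.comp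
          ((SchwartzMap.fderivCLM ℝ _ _ ψ).continuous.comp (continuous_const.sub continuous_id))
      -- norms
      have hnormH : ∀ t y, ‖H t y‖ = ‖ψ (Function.update x j t - y)‖ * ‖φ y‖ := by
        intro t y
        simp only [hH]
        rw [norm_mul, norm_mul, norm_cexp_of_re_eq_zero _ (by simp), RCLike.norm_conj, one_mul]
      have hnormH' : ∀ t y, ‖H' t y‖ =
          ‖fderiv ℝ ψ (Function.update x j t - y) (Pi.single j 1)‖ * ‖φ y‖ := by
        intro t y
        simp only [hH']
        rw [norm_mul, norm_mul, norm_cexp_of_re_eq_zero _ (by simp), RCLike.norm_conj, one_mul]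
      -- integrability
      have hHint : Integrable (H (x j)) := by
        apply Integrable.mono' ((φ.integrable.norm).const_mul Cψ)
          (hHcont (x j)).aestronglyMeasurable
        filter_upwards with y
        rw [hnormH]
        calc ‖ψ (Function.update x j (x j) - y)‖ * ‖φ y‖ ≤ Cψ * ‖φ y‖ := by
              gcongr; exact hCψ _
          _ = Cψ * ‖φ y‖ := rfl
      have hboundInt : Integrable (fun y : Fin n → ℝ =>
          (M * ‖(Pi.single j 1 : Fin n → ℝ)‖) * ‖φ y‖) :=
        (φ.integrable.norm).const_mul _
      -- derivative under the integral
      have hInt : HasDerivAt (fun t => ∫ y, H t y) (∫ y, H' (x j) y) (x j) := by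
        refine (hasDerivAt_integral_of_dominated_loc_of_deriv_le (Metric.ball_mem_nhds _ one_pos)
          (Filter.Eventually.of_forall fun t => (hHcont t).aestronglyMeasurable) hHint
          (F' := H') ((hH'cont (x j)).aestronglyMeasurable) ?_ hboundInt ?_).2
        · filter_upwards with y t _
          rw [hnormH']
          gcongr
          exact hfd _
        · filter_upwards with y t _
          have hpath : HasDerivAt (fun s : ℝ => Function.update x j s - y)
              (Pi.single j 1) t := (hasDerivAt_update x j t).sub_const y
          have hψd : HasDerivAt (fun s : ℝ => ψ (Function.update x j s - y))
              (fderiv ℝ ψ (Function.update x j t - y) (Pi.single j 1)) t :=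
            (ψ.differentiableAt.hasFDerivAt).comp_hasDerivAt t hpath
          exact (hψd.const_mul (Complex.exp ((Complex.I / ℏ) *
            ((∑ i, p i * y i : ℝ) : ℂ)))).mul_const ((starRingEnd ℂ) (φ y))
      have hG' : HasDerivAt G ((-(Complex.I / (2 * ℏ))) * (p j) * G (x j)) (x j) :=
        hasDerivAt_cexp_linear _ (p j) c₁ (x j)
      have hW : HasDerivAt (fun t => C * G t * ∫ y, H t y)
          (C * ((-(Complex.I / (2 * ℏ))) * (p j) * G (x j)) * (∫ y, H (x j) y) +
            C * G (x j) * ∫ y, H' (x j) y) (x j) := (hG'.const_mul C).mul hInt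
      have hvalψ : wavepacket ℏ φ ψ (x, p) = C * G (x j) * ∫ y, H (x j) y := by
        have h0 := congrFun (hfun ψ) (x j)
        rw [Function.update_eq_self] at h0
        rw [h0]
        simp only [hH, Function.update_eq_self]
      have hvalD : wavepacket ℏ φ (fun x' => -Complex.I * ℏ * fderiv ℝ (⇑ψ) x'
          (Pi.single j 1)) (x, p) =
          C * G (x j) * ((-Complex.I * ℏ) * ∫ y, H' (x j) y) := by
        have h0 := congrFun (hfun fun x' => -Complex.I * ℏ * fderiv ℝ (⇑ψ) x'
          (Pi.single j 1)) (x j)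
        rw [Function.update_eq_self] at h0
        have hintEq : (∫ y, Complex.exp ((Complex.I / ℏ) * ((∑ i, p i * y i : ℝ) : ℂ)) *
            (-Complex.I * ℏ * fderiv ℝ (⇑ψ) (x - y) (Pi.single j 1)) *
            (starRingEnd ℂ) (φ y)) = (-Complex.I * ℏ) * ∫ y, H' (x j) y := by
          rw [← integral_const_mul]
          congr 1
          funext y
          simp only [hH', Function.update_eq_self]
          ring
        rw [h0, hintEq]
      rw [show (fun t : ℝ => wavepacket ℏ φ ψ (Function.update x j t, p)) =
        fun t => C * G t * ∫ y, H t y from hfun ψ, hW.deriv, hvalψ, hvalD]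
      have hkey : Complex.I * (ℏ : ℂ) * (Complex.I / (2 * ℏ)) = -(1/2) := by
        rw [div_eq_mul_inv, mul_inv]
        linear_combination (((ℏ : ℂ) * (ℏ:ℂ)⁻¹) / 2) * Complex.I_mul_I + (-(1:ℂ)/2) * hinv
      linear_combination (-((p j : ℂ) * C * G (x j) * ∫ y, H (x j) y)) * hkey
end
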